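/- Total-correctness soundness: for any While statement s, state predicate U and setoid trace predicate P, if ⊢{U} s {P} is derivable, then for any state σ with U σ there exists a trace τ such that (s,σ) ⇒ τ and τ satisfies P. -/

import Mathlib

namespace WhileTrace

/-- Program variables. -/
abbrev Var := ℕ
/-- States assign integer values to variables. -/
abbrev State := Var → ℤ
/-- Arithmetic expressions, modelled by their integer value in each state. -/
abbrev Expr := State → ℤ

/-- State update `σ[x ↦ v]`. -/
def update (σ : State) (x : Var) (v : ℤ) : State := Function.update σ x v

/-- Reading an expression as a boolean: `σ ⊨ e`. -/
def istrue (e : Expr) (σ : State) : Prop := e σ ≠ 0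

/-- Traces: nonempty, possibly infinite sequences of states
(a head state together with a possibly infinite sequence of further states). -/
def Trace : Type := State × Stream'.Seq State

/-- The singleton trace `⟨σ⟩`. -/
def Trace.single (σ : State) : Trace := (σ, Stream'.Seq.nil)

/-- The cons trace `σ :: τ`. -/
def Trace.cons (σ : State) (τ : Trace) : Trace := (σ, Stream'.Seq.cons τ.1 τ.2)

/-- The first state of a trace. -/
def Trace.hd (τ : Trace) : State := τ.1

/-- Bisimilarity of traces `τ ≈ τ'`, as a greatest fixed point:
there is a relation `R` relating the two traces that is consistent with the
coinductive rules `⟨σ⟩ ≈ ⟨σ⟩` and `σ::τ ≈ σ::τ'` whenever `τ ≈ τ'`. -/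
def Bisim (τ τ' : Trace) : Prop :=
  ∃ R : Trace → Trace → Prop, R τ τ' ∧
    ∀ a b, R a b →
      (∃ σ, a = Trace.single σ ∧ b = Trace.single σ) ∨
      (∃ σ a' b', a = Trace.cons σ a' ∧ b = Trace.cons σ b' ∧ R a' b')

/-- Finiteness `τ ↓ σ` : `τ` is finite with last state `σ` (inductive). -/
inductive Converges : Trace → State → Prop
  | single (σ : State) : Converges (Trace.single σ) σ
  | cons (σ' : State) {τ : Trace} {σ : State} :
      Converges τ σ → Converges (Trace.cons σ' τ) σ

/-- Infiniteness of a trace (coinductive, as a greatest fixed point). -/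
def InfiniteT (τ : Trace) : Prop :=
  ∃ P : Trace → Prop, P τ ∧ ∀ a, P a → ∃ σ a', a = Trace.cons σ a' ∧ P a'

/-- Statements of the While language. -/
inductive Stmt : Type
  | assign (x : Var) (e : Expr)
  | skip
  | seq (s₀ s₁ : Stmt)
  | ifte (e : Expr) (st sf : Stmt)
  | whileDo (e : Expr) (st : Stmt)

/-- A pair of relations `(E, ES)` is consistent with the rules of evaluation
and extended evaluation: every claimed evaluation is backed by one of the
coinductive rules, with premises again in `(E, ES)`. -/
def EvalConsistent (E : Stmt → State → Trace → Prop)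
    (ES : Stmt → Trace → Trace → Prop) : Prop :=
  (∀ x e σ τ, E (.assign x e) σ τ →
      τ = Trace.cons σ (Trace.single (update σ x (e σ)))) ∧
  (∀ σ τ, E .skip σ τ → τ = Trace.single σ) ∧
  (∀ s₀ s₁ σ τ', E (.seq s₀ s₁) σ τ' → ∃ τ, E s₀ σ τ ∧ ES s₁ τ τ') ∧
  (∀ e st sf σ τ, E (.ifte e st sf) σ τ →
      (istrue e σ ∧ ES st (Trace.cons σ (Trace.single σ)) τ) ∨
      (¬ istrue e σ ∧ ES sf (Trace.cons σ (Trace.single σ)) τ)) ∧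
  (∀ e st σ τ', E (.whileDo e st) σ τ' →
      (istrue e σ ∧ ∃ τ, ES st (Trace.cons σ (Trace.single σ)) τ ∧
        ES (.whileDo e st) τ τ') ∨
      (¬ istrue e σ ∧ τ' = Trace.cons σ (Trace.single σ))) ∧
  (∀ s τ τ', ES s τ τ' →
      (∃ σ, τ = Trace.single σ ∧ E s σ τ') ∨
      (∃ σ τ₀ τ₀', τ = Trace.cons σ τ₀ ∧ τ' = Trace.cons σ τ₀' ∧ ES s τ₀ τ₀'))

/-- Evaluation `(s,σ) ⇒ τ` : greatest fixed point of the mutual coinductive rules. -/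
def Exec (s : Stmt) (σ : State) (τ : Trace) : Prop :=
  ∃ E ES, EvalConsistent E ES ∧ E s σ τ

/-- Extended evaluation `(s,τ) ⇒* τ'`. -/
def ExecSeq (s : Stmt) (τ τ' : Trace) : Prop :=
  ∃ E ES, EvalConsistent E ES ∧ ES s τ τ'

/-- The standard inductive state-based big-step semantics `(s,σ) ⇓ σ'`. -/
inductive BigStep : Stmt → State → State → Prop
  | assign (x : Var) (e : Expr) (σ : State) :
      BigStep (.assign x e) σ (update σ x (e σ))
  | skip (σ : State) : BigStep .skip σ σ
  | seq {s₀ s₁ : Stmt} {σ σ' σ'' : State} :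
      BigStep s₀ σ σ' → BigStep s₁ σ' σ'' → BigStep (.seq s₀ s₁) σ σ''
  | ifTrue {e : Expr} {st sf : Stmt} {σ σ' : State} :
      istrue e σ → BigStep st σ σ' → BigStep (.ifte e st sf) σ σ'
  | ifFalse {e : Expr} {st sf : Stmt} {σ σ' : State} :
      ¬ istrue e σ → BigStep sf σ σ' → BigStep (.ifte e st sf) σ σ'
  | whileTrue {e : Expr} {st : Stmt} {σ σ' σ'' : State} :
      istrue e σ → BigStep st σ σ' → BigStep (.whileDo e st) σ' σ'' →
      BigStep (.whileDo e st) σ σ''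
  | whileFalse {e : Expr} {st : Stmt} {σ : State} :
      ¬ istrue e σ → BigStep (.whileDo e st) σ σ

/-- State predicates. -/
abbrev StatePred := State → Prop
/-- Trace predicates. -/
abbrev TracePred := Trace → Prop

/-- A setoid trace predicate respects bisimilarity. -/
def IsSetoidPred (P : TracePred) : Prop := ∀ τ τ', P τ → Bisim τ τ' → P τ'

/-- The singleton predicate `[U]`. -/
def Sglt (U : StatePred) : TracePred :=
  fun τ => ∃ σ, U σ ∧ τ = Trace.single σ

/-- The doubleton predicate `⟨U⟩`. -/
def Dup (U : StatePred) : TracePred :=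
  fun τ => ∃ σ, U σ ∧ τ = Trace.cons σ (Trace.single σ)

/-- The update predicate `U[x ↦ e]`. -/
def UpdPred (U : StatePred) (x : Var) (e : Expr) : TracePred :=
  fun τ => ∃ σ, U σ ∧ τ = Trace.cons σ (Trace.single (update σ x (e σ)))

/-- `Q follows τ in τ'` (coinductive, as a greatest fixed point). -/
def Follows (Q : TracePred) (τ τ' : Trace) : Prop :=
  ∃ R : Trace → Trace → Prop, R τ τ' ∧
    ∀ a b, R a b →
      (∃ σ, a = Trace.single σ ∧ b.hd = σ ∧ Q b) ∨
      (∃ σ a' b', a = Trace.cons σ a' ∧ b = Trace.cons σ b' ∧ R a' b')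

/-- The chop `P ** Q`. -/
def Chop (P Q : TracePred) : TracePred :=
  fun τ' => ∃ τ, P τ ∧ Follows Q τ τ'

/-- The iteration `P*` (coinductive, as a greatest fixed point). -/
def Iter (P : TracePred) : TracePred := fun τ =>
  ∃ X : TracePred, X τ ∧
    ∀ a, X a → Sglt (fun _ => True) a ∨ ∃ τ₀, P τ₀ ∧ Follows X τ₀ a

/-- `Last P` : states that are the last state of some finite trace satisfying `P`. -/
def Last (P : TracePred) : StatePred := fun σ => ∃ τ, P τ ∧ Converges τ σ

/-- The trace predicate `finite`. -/
def FiniteT : TracePred := fun τ => ∃ σ, Converges τ σ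

/-- Derivability `⊢ {U} s {P}` in the trace-based Hoare logic. -/
inductive THoare : StatePred → Stmt → TracePred → Prop
  | assign (U : StatePred) (x : Var) (e : Expr) :
      THoare U (.assign x e) (UpdPred U x e)
  | skip (U : StatePred) : THoare U .skip (Sglt U)
  | seq {U V : StatePred} {s₀ s₁ : Stmt} {P Q : TracePred} :
      THoare U s₀ (Chop P (Sglt V)) → THoare V s₁ Q →
      THoare U (.seq s₀ s₁) (Chop P Q)
  | ifte {U : StatePred} {e : Expr} {st sf : Stmt} {P : TracePred} :
      THoare (fun σ => istrue e σ ∧ U σ) st P →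
      THoare (fun σ => ¬ istrue e σ ∧ U σ) sf P →
      THoare U (.ifte e st sf) (Chop (Dup U) P)
  | whileDo {U I : StatePred} {e : Expr} {st : Stmt} {P : TracePred} :
      (∀ σ, U σ → I σ) →
      THoare (fun σ => istrue e σ ∧ I σ) st (Chop P (Sglt I)) →
      THoare U (.whileDo e st)
        (Chop (Dup U)
          (Chop (Iter (Chop P (Dup I))) (Sglt (fun σ => ¬ istrue e σ))))
  | conseq {U U' : StatePred} {s : Stmt} {P P' : TracePred} :
      (∀ σ, U σ → U' σ) → THoare U' s P' → (∀ τ, P' τ → P τ) →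
      THoare U s P
  | exist {Z : Type} {U : Z → StatePred} {s : Stmt} {P : Z → TracePred} :
      (∀ z, THoare (U z) s (P z)) →
      THoare (fun σ => ∃ z, U z σ) s (fun τ => ∃ z, P z τ)

/-- Derivability `⊢p {U} s {Z}` in the state-based partial-correctness Hoare logic. -/
inductive PHoare : StatePred → Stmt → StatePred → Prop
  | assign (Z : StatePred) (x : Var) (e : Expr) :
      PHoare (fun σ => Z (update σ x (e σ))) (.assign x e) Z
  | skip (U : StatePred) : PHoare U .skip U
  | seq {U V Z : StatePred} {s₀ s₁ : Stmt} :
      PHoare U s₀ V → PHoare V s₁ Z → PHoare U (.seq s₀ s₁) Z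
  | ifte {U Z : StatePred} {e : Expr} {st sf : Stmt} :
      PHoare (fun σ => istrue e σ ∧ U σ) st Z →
      PHoare (fun σ => ¬ istrue e σ ∧ U σ) sf Z →
      PHoare U (.ifte e st sf) Z
  | whileDo {I : StatePred} {e : Expr} {st : Stmt} :
      PHoare (fun σ => istrue e σ ∧ I σ) st I →
      PHoare I (.whileDo e st) (fun σ => I σ ∧ ¬ istrue e σ)
  | exist {Z : Type} {U V : Z → StatePred} {s : Stmt} :
      (∀ z, PHoare (U z) s (V z)) →
      PHoare (fun σ => ∃ z, U z σ) s (fun σ => ∃ z, V z σ)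
  | conseq {U U' Z Z' : StatePred} {s : Stmt} :
      (∀ σ, U σ → U' σ) → PHoare U' s Z' → (∀ σ, Z' σ → Z σ) →
      PHoare U s Z

/-- Derivability `⊢t {U} s {Z}` in the state-based total-correctness Hoare
logic, with the `while-fun` rule. -/
inductive TotHoare : StatePred → Stmt → StatePred → Prop
  | assign (Z : StatePred) (x : Var) (e : Expr) :
      TotHoare (fun σ => Z (update σ x (e σ))) (.assign x e) Z
  | skip (U : StatePred) : TotHoare U .skip U
  | seq {U V Z : StatePred} {s₀ s₁ : Stmt} :
      TotHoare U s₀ V → TotHoare V s₁ Z → TotHoare U (.seq s₀ s₁) Z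
  | ifte {U Z : StatePred} {e : Expr} {st sf : Stmt} :
      TotHoare (fun σ => istrue e σ ∧ U σ) st Z →
      TotHoare (fun σ => ¬ istrue e σ ∧ U σ) sf Z →
      TotHoare U (.ifte e st sf) Z
  | whileFun {I : StatePred} {e : Expr} {st : Stmt} (t : State → ℕ) (m : ℕ) :
      (∀ n : ℕ, TotHoare (fun σ => istrue e σ ∧ I σ ∧ t σ = n) st
        (fun σ => I σ ∧ t σ < n)) →
      TotHoare (fun σ => I σ ∧ t σ = m) (.whileDo e st)
        (fun σ => I σ ∧ t σ ≤ m ∧ ¬ istrue e σ)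
  | exist {Z : Type} {U V : Z → StatePred} {s : Stmt} :
      (∀ z, TotHoare (U z) s (V z)) →
      TotHoare (fun σ => ∃ z, U z σ) s (fun σ => ∃ z, V z σ)
  | conseq {U U' Z Z' : StatePred} {s : Stmt} :
      (∀ σ, U σ → U' σ) → TotHoare U' s Z' → (∀ σ, Z' σ → Z σ) →
      TotHoare U s Z

section Aux

open Stream' (Seq)

/-! ### Basic trace facts -/

lemma Trace.single_inj {σ σ' : State} (h : Trace.single σ = Trace.single σ') : σ = σ' :=
  congrArg Prod.fst h

lemma Trace.single_ne_cons {σ σ' : State} {τ : Trace} :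
    Trace.single σ ≠ Trace.cons σ' τ := by
  intro h
  have h2 := congrArg Prod.snd h
  have h3 := congrArg Seq.destruct h2
  rw [show (Trace.single σ).2 = Seq.nil from rfl,
      show (Trace.cons σ' τ).2 = Seq.cons τ.1 τ.2 from rfl,
      Seq.destruct_nil, Seq.destruct_cons] at h3
  cases h3

lemma Trace.cons_inj {σ σ' : State} {τ τ' : Trace}
    (h : Trace.cons σ τ = Trace.cons σ' τ') : σ = σ' ∧ τ = τ' := by
  have h1 : σ = σ' := congrArg Prod.fst h
  have h2 : Seq.cons τ.1 τ.2 = Seq.cons τ'.1 τ'.2 := congrArg Prod.snd h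
  have h3 := Seq.cons_injective2 h2
  exact ⟨h1, Prod.ext h3.1 h3.2⟩

lemma trace_cases (τ : Trace) :
    (∃ σ, τ = Trace.single σ) ∨ ∃ σ τ', τ = Trace.cons σ τ' := by
  obtain ⟨σ, s⟩ := τ
  rcases h : s.destruct with _ | ⟨a, s'⟩
  · exact Or.inl ⟨σ, by rw [show Trace.single σ = (σ, Seq.nil) from rfl,
      Seq.destruct_eq_none h]⟩
  · exact Or.inr ⟨σ, (a, s'), by
      rw [show Trace.cons σ (a, s') = (σ, Seq.cons a s') from rfl,
        Seq.destruct_eq_cons h]⟩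

lemma converges_inv {τ : Trace} {σ : State} (h : Converges τ σ) :
    (τ = Trace.single σ) ∨ ∃ σ' τ', τ = Trace.cons σ' τ' ∧ Converges τ' σ := by
  cases h with
  | single => exact Or.inl rfl
  | cons σ' h => exact Or.inr ⟨σ', _, rfl, h⟩

lemma converges_single_inv {σ' σ : State} (h : Converges (Trace.single σ') σ) :
    σ' = σ := by
  rcases converges_inv h with h1 | ⟨σ₁, τ₁, h1, _⟩
  · exact Trace.single_inj h1
  · exact absurd h1 Trace.single_ne_cons

lemma converges_cons_inv {σ' σ : State} {τ : Trace}
    (h : Converges (Trace.cons σ' τ) σ) : Converges τ σ := by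
  rcases converges_inv h with h1 | ⟨σ₁, τ₁, h1, h2⟩
  · exact absurd h1.symm Trace.single_ne_cons
  · obtain ⟨-, rfl⟩ := Trace.cons_inj h1; exact h2

lemma not_finite_cases {τ : Trace} (h : ¬ FiniteT τ) :
    ∃ σ τ', τ = Trace.cons σ τ' ∧ ¬ FiniteT τ' := by
  rcases trace_cases τ with ⟨σ, rfl⟩ | ⟨σ, τ', rfl⟩
  · exact absurd ⟨σ, Converges.single σ⟩ h
  · exact ⟨σ, τ', rfl, fun ⟨σ₁, hc⟩ => h ⟨σ₁, Converges.cons σ hc⟩⟩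

/-! ### Follows API -/

lemma follows_dest {Q : TracePred} {a b : Trace} (h : Follows Q a b) :
    (∃ σ, a = Trace.single σ ∧ b.hd = σ ∧ Q b) ∨
    (∃ σ a' b', a = Trace.cons σ a' ∧ b = Trace.cons σ b' ∧ Follows Q a' b') := by
  obtain ⟨R, hR, hc⟩ := h
  rcases hc _ _ hR with h1 | ⟨σ, a', b', h1, h2, h3⟩
  · exact Or.inl h1
  · exact Or.inr ⟨σ, a', b', h1, h2, R, h3, hc⟩

lemma follows_single {Q : TracePred} {σ : State} {b : Trace}
    (h1 : b.hd = σ) (h2 : Q b) : Follows Q (Trace.single σ) b := by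
  refine ⟨fun x y => x = Trace.single σ ∧ y = b, ⟨rfl, rfl⟩, ?_⟩
  rintro x y ⟨rfl, rfl⟩
  exact Or.inl ⟨σ, rfl, h1, h2⟩

lemma follows_cons {Q : TracePred} {σ : State} {a b : Trace}
    (h : Follows Q a b) : Follows Q (Trace.cons σ a) (Trace.cons σ b) := by
  obtain ⟨R, hR, hc⟩ := h
  refine ⟨fun x y => R x y ∨ (x = Trace.cons σ a ∧ y = Trace.cons σ b),
    Or.inr ⟨rfl, rfl⟩, ?_⟩
  rintro x y (hxy | ⟨rfl, rfl⟩)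
  · rcases hc x y hxy with h1 | ⟨σ', a', b', h1, h2, h3⟩
    · exact Or.inl h1
    · exact Or.inr ⟨σ', a', b', h1, h2, Or.inl h3⟩
  · exact Or.inr ⟨σ, a, b, rfl, rfl, Or.inl hR⟩

lemma follows_coind {Q : TracePred} (R : Trace → Trace → Prop)
    (hR : ∀ a b, R a b →
      (∃ σ, a = Trace.single σ ∧ b.hd = σ ∧ Q b) ∨
      (∃ σ a' b', a = Trace.cons σ a' ∧ b = Trace.cons σ b' ∧
        (R a' b' ∨ Follows Q a' b'))) :
    ∀ a b, R a b → Follows Q a b := by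
  intro a b h
  refine ⟨fun x y => R x y ∨ Follows Q x y, Or.inl h, ?_⟩
  rintro x y (hxy | hxy)
  · rcases hR x y hxy with h1 | ⟨σ, a', b', h1, h2, h3⟩
    · exact Or.inl h1
    · exact Or.inr ⟨σ, a', b', h1, h2, h3⟩
  · rcases follows_dest hxy with h1 | ⟨σ, a', b', h1, h2, h3⟩
    · exact Or.inl h1
    · exact Or.inr ⟨σ, a', b', h1, h2, Or.inr h3⟩

lemma converges_of_follows_sglt {V : StatePred} :
    ∀ {τ σ}, Converges τ σ → ∀ {τ₀}, Follows (Sglt V) τ₀ τ → V σ := by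
  intro τ σ hc
  induction hc with
  | single σ =>
    intro τ₀ hf
    rcases follows_dest hf with ⟨σ', h1, h2, σ'', hV, he⟩ | ⟨σ', a', b', h1, h2, h3⟩
    · obtain rfl := Trace.single_inj he; exact hV
    · exact absurd h2 Trace.single_ne_cons
  | cons σ' hc ih =>
    intro τ₀ hf
    rcases follows_dest hf with ⟨σ₀, h1, h2, σ'', hV, he⟩ | ⟨σ₀, a', b', h1, h2, h3⟩
    · exact absurd he.symm Trace.single_ne_cons
    · obtain ⟨rfl, rfl⟩ := Trace.cons_inj h2; exact ih h3

lemma finite_of_follows {Q : TracePred} :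
    ∀ {b σ}, Converges b σ → ∀ {a}, Follows Q a b → FiniteT a := by
  intro b σ hc
  induction hc with
  | single σ =>
    intro a hf
    rcases follows_dest hf with ⟨σ', h1, h4, h5⟩ | ⟨σ', a', b', h1, h2, h3⟩
    · subst h1; exact ⟨σ', Converges.single σ'⟩
    · exact absurd h2 Trace.single_ne_cons
  | cons σ' hc ih =>
    intro a hf
    rcases follows_dest hf with ⟨σ₀, h1, h4, h5⟩ | ⟨σ₀, a', b', h1, h2, h3⟩
    · subst h1; exact ⟨σ₀, Converges.single σ₀⟩
    · obtain ⟨rfl, rfl⟩ := Trace.cons_inj h2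
      obtain ⟨σ₁, hc₁⟩ := ih h3
      subst h1
      exact ⟨σ₁, Converges.cons σ' hc₁⟩

lemma follows_of_not_finite {Q Q' : TracePred} {a b : Trace}
    (hnf : ¬ FiniteT a) (hf : Follows Q a b) : Follows Q' a b := by
  refine follows_coind (fun x y => ¬ FiniteT x ∧ Follows Q x y) ?_ a b ⟨hnf, hf⟩
  rintro x y ⟨hx, hxy⟩
  rcases follows_dest hxy with ⟨σ, rfl, _, _⟩ | ⟨σ, a', b', rfl, h2, h3⟩
  · exact absurd ⟨σ, Converges.single σ⟩ hx
  · exact Or.inr ⟨σ, a', b', rfl, h2, Or.inl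
      ⟨fun ⟨σ₁, hc⟩ => hx ⟨σ₁, Converges.cons σ hc⟩, h3⟩⟩

lemma follows_self {Q : TracePred} {a : Trace}
    (h : ∀ σ, Converges a σ → Q (Trace.single σ)) : Follows Q a a := by
  refine follows_coind (fun x y => x = y ∧ ∀ σ, Converges x σ → Q (Trace.single σ))
    ?_ a a ⟨rfl, h⟩
  rintro x y ⟨rfl, hx⟩
  rcases trace_cases x with ⟨σ, rfl⟩ | ⟨σ, x', rfl⟩
  · exact Or.inl ⟨σ, rfl, rfl, hx σ (Converges.single σ)⟩
  · exact Or.inr ⟨σ, x', x', rfl, rfl, Or.inl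
      ⟨rfl, fun σ₁ hc => hx σ₁ (Converges.cons σ hc)⟩⟩

end Aux

section ExecAPI

lemma evalConsistent_exec : EvalConsistent Exec ExecSeq := by
  refine ⟨?_, ?_, ?_, ?_, ?_, ?_⟩
  · rintro x e σ τ ⟨E, ES, hc, hE⟩
    exact hc.1 _ _ _ _ hE
  · rintro σ τ ⟨E, ES, hc, hE⟩
    exact hc.2.1 _ _ hE
  · rintro s₀ s₁ σ τ' ⟨E, ES, hc, hE⟩
    obtain ⟨τ, h1, h2⟩ := hc.2.2.1 _ _ _ _ hE
    exact ⟨τ, ⟨E, ES, hc, h1⟩, ⟨E, ES, hc, h2⟩⟩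
  · rintro e st sf σ τ ⟨E, ES, hc, hE⟩
    rcases hc.2.2.2.1 _ _ _ _ _ hE with ⟨h1, h2⟩ | ⟨h1, h2⟩
    · exact Or.inl ⟨h1, E, ES, hc, h2⟩
    · exact Or.inr ⟨h1, E, ES, hc, h2⟩
  · rintro e st σ τ' ⟨E, ES, hc, hE⟩
    rcases hc.2.2.2.2.1 _ _ _ _ hE with ⟨h1, τ, h2, h3⟩ | ⟨h1, h2⟩
    · exact Or.inl ⟨h1, τ, ⟨E, ES, hc, h2⟩, ⟨E, ES, hc, h3⟩⟩
    · exact Or.inr ⟨h1, h2⟩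
  · rintro s τ τ' ⟨E, ES, hc, hE⟩
    rcases hc.2.2.2.2.2 _ _ _ hE with ⟨σ, h1, h2⟩ | ⟨σ, τ₀, τ₀', h1, h2, h3⟩
    · exact Or.inl ⟨σ, h1, E, ES, hc, h2⟩
    · exact Or.inr ⟨σ, τ₀, τ₀', h1, h2, E, ES, hc, h3⟩

lemma exec_hd : ∀ (s : Stmt) {σ : State} {τ : Trace}, Exec s σ τ → τ.hd = σ := by
  intro s
  induction s with
  | assign x e =>
    intro σ τ h
    rw [evalConsistent_exec.1 _ _ _ _ h]; rfl
  | skip =>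
    intro σ τ h
    rw [evalConsistent_exec.2.1 _ _ h]; rfl
  | seq s₀ s₁ ih₀ ih₁ =>
    intro σ τ' h
    obtain ⟨τ, h1, h2⟩ := evalConsistent_exec.2.2.1 _ _ _ _ h
    have hτ := ih₀ h1
    rcases evalConsistent_exec.2.2.2.2.2 _ _ _ h2 with ⟨σ₀, rfl, hE⟩ |
      ⟨σ₀, τ₀, τ₀', h3, rfl, h4⟩
    · rw [ih₁ hE]; exact hτ
    · subst h3; exact hτ
  | ifte e st sf iht ihf =>
    intro σ τ h
    have hds : ∀ τ₁, ExecSeq st (Trace.cons σ (Trace.single σ)) τ₁ → τ₁.hd = σ := by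
      intro τ₁ hES
      rcases evalConsistent_exec.2.2.2.2.2 _ _ _ hES with ⟨σ₀, heq, hE⟩ |
        ⟨σ₀, τ₀, τ₀', h3, rfl, h4⟩
      · exact absurd heq.symm Trace.single_ne_cons
      · exact (Trace.cons_inj h3).1.symm
    have hds' : ∀ τ₁, ExecSeq sf (Trace.cons σ (Trace.single σ)) τ₁ → τ₁.hd = σ := by
      intro τ₁ hES
      rcases evalConsistent_exec.2.2.2.2.2 _ _ _ hES with ⟨σ₀, heq, hE⟩ |
        ⟨σ₀, τ₀, τ₀', h3, rfl, h4⟩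
      · exact absurd heq.symm Trace.single_ne_cons
      · exact (Trace.cons_inj h3).1.symm
    rcases evalConsistent_exec.2.2.2.1 _ _ _ _ _ h with ⟨h1, h2⟩ | ⟨h1, h2⟩
    · exact hds _ h2
    · exact hds' _ h2
  | whileDo e st ih =>
    intro σ τ' h
    rcases evalConsistent_exec.2.2.2.2.1 _ _ _ _ h with ⟨h1, τ, h2, h3⟩ | ⟨h1, h2⟩
    · rcases evalConsistent_exec.2.2.2.2.2 _ _ _ h2 with ⟨σ₀, heq, hE⟩ |
        ⟨σ₀, τ₀, τ₀', h4, rfl, h5⟩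
      · exact absurd heq.symm Trace.single_ne_cons
      · obtain ⟨rfl, -⟩ := Trace.cons_inj h4
        rcases evalConsistent_exec.2.2.2.2.2 _ _ _ h3 with ⟨σ₁, heq, hE⟩ |
          ⟨σ₁, τ₁, τ₁', h6, rfl, h7⟩
        · exact absurd heq.symm Trace.single_ne_cons
        · exact (Trace.cons_inj h6).1.symm
    · rw [h2]; rfl

lemma execSeq_single {s : Stmt} {σ : State} {τ : Trace} (h : Exec s σ τ) :
    ExecSeq s (Trace.single σ) τ := by
  refine ⟨Exec, fun s' a b => ExecSeq s' a b ∨ (s' = s ∧ a = Trace.single σ ∧ b = τ),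
    ⟨evalConsistent_exec.1, evalConsistent_exec.2.1, ?_, ?_, ?_, ?_⟩,
    Or.inr ⟨rfl, rfl, rfl⟩⟩
  · intro s₀ s₁ σ' τ' hE
    obtain ⟨τ₀, h1, h2⟩ := evalConsistent_exec.2.2.1 _ _ _ _ hE
    exact ⟨τ₀, h1, Or.inl h2⟩
  · intro e st sf σ' τ' hE
    rcases evalConsistent_exec.2.2.2.1 _ _ _ _ _ hE with ⟨h1, h2⟩ | ⟨h1, h2⟩
    · exact Or.inl ⟨h1, Or.inl h2⟩
    · exact Or.inr ⟨h1, Or.inl h2⟩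
  · intro e st σ' τ' hE
    rcases evalConsistent_exec.2.2.2.2.1 _ _ _ _ hE with ⟨h1, τ₀, h2, h3⟩ | hh
    · exact Or.inl ⟨h1, τ₀, Or.inl h2, Or.inl h3⟩
    · exact Or.inr hh
  · rintro s' a b (hES | ⟨rfl, rfl, rfl⟩)
    · rcases evalConsistent_exec.2.2.2.2.2 _ _ _ hES with ⟨σ₀, h1, h2⟩ |
        ⟨σ₀, τ₀, τ₀', h1, h2, h3⟩
      · exact Or.inl ⟨σ₀, h1, h2⟩
      · exact Or.inr ⟨σ₀, τ₀, τ₀', h1, h2, Or.inl h3⟩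
    · exact Or.inl ⟨σ, rfl, h⟩

lemma execSeq_cons {s : Stmt} {σ : State} {τ τ' : Trace} (h : ExecSeq s τ τ') :
    ExecSeq s (Trace.cons σ τ) (Trace.cons σ τ') := by
  refine ⟨Exec, fun s' a b => ExecSeq s' a b ∨
      (s' = s ∧ a = Trace.cons σ τ ∧ b = Trace.cons σ τ'),
    ⟨evalConsistent_exec.1, evalConsistent_exec.2.1, ?_, ?_, ?_, ?_⟩,
    Or.inr ⟨rfl, rfl, rfl⟩⟩
  · intro s₀ s₁ σ' τ'' hE
    obtain ⟨τ₀, h1, h2⟩ := evalConsistent_exec.2.2.1 _ _ _ _ hE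
    exact ⟨τ₀, h1, Or.inl h2⟩
  · intro e st sf σ' τ'' hE
    rcases evalConsistent_exec.2.2.2.1 _ _ _ _ _ hE with ⟨h1, h2⟩ | ⟨h1, h2⟩
    · exact Or.inl ⟨h1, Or.inl h2⟩
    · exact Or.inr ⟨h1, Or.inl h2⟩
  · intro e st σ' τ'' hE
    rcases evalConsistent_exec.2.2.2.2.1 _ _ _ _ hE with ⟨h1, τ₀, h2, h3⟩ | hh
    · exact Or.inl ⟨h1, τ₀, Or.inl h2, Or.inl h3⟩
    · exact Or.inr hh
  · rintro s' a b (hES | ⟨rfl, rfl, rfl⟩)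
    · rcases evalConsistent_exec.2.2.2.2.2 _ _ _ hES with ⟨σ₀, h1, h2⟩ |
        ⟨σ₀, τ₀, τ₀', h1, h2, h3⟩
      · exact Or.inl ⟨σ₀, h1, h2⟩
      · exact Or.inr ⟨σ₀, τ₀, τ₀', h1, h2, Or.inl h3⟩
    · exact Or.inr ⟨σ, τ, τ', rfl, rfl, Or.inl h⟩

/-- Add a single claim to `Exec`, with premises justified in `(Exec, ExecSeq)`. -/
lemma exec_intro {s : Stmt} {σ : State} {τ : Trace}
    (hjust : ∀ (E : Stmt → State → Trace → Prop) (ES : Stmt → Trace → Trace → Prop),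
      (∀ s' σ' τ', Exec s' σ' τ' → E s' σ' τ') →
      (∀ s' τ₀ τ₁, ExecSeq s' τ₀ τ₁ → ES s' τ₀ τ₁) →
      ((∀ x e, s = .assign x e → τ = Trace.cons σ (Trace.single (update σ x (e σ)))) ∧
       (s = .skip → τ = Trace.single σ) ∧
       (∀ s₀ s₁, s = .seq s₀ s₁ → ∃ τ₀, E s₀ σ τ₀ ∧ ES s₁ τ₀ τ) ∧
       (∀ e st sf, s = .ifte e st sf →
         (istrue e σ ∧ ES st (Trace.cons σ (Trace.single σ)) τ) ∨
         (¬ istrue e σ ∧ ES sf (Trace.cons σ (Trace.single σ)) τ)) ∧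
       (∀ e st, s = .whileDo e st →
         (istrue e σ ∧ ∃ τ₀, ES st (Trace.cons σ (Trace.single σ)) τ₀ ∧
           ES (.whileDo e st) τ₀ τ) ∨
         (¬ istrue e σ ∧ τ = Trace.cons σ (Trace.single σ))))) :
    Exec s σ τ := by
  refine ⟨fun s' a b => Exec s' a b ∨ (s' = s ∧ a = σ ∧ b = τ), ExecSeq,
    ⟨?_, ?_, ?_, ?_, ?_, ?_⟩, Or.inr ⟨rfl, rfl, rfl⟩⟩
  · rintro x e σ' τ' (hE | ⟨rfl, rfl, rfl⟩)
    · exact evalConsistent_exec.1 _ _ _ _ hE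
    · exact (hjust _ _ (fun _ _ _ h => h) (fun _ _ _ h => h)).1 x e rfl
  · rintro σ' τ' (hE | ⟨rfl, rfl, rfl⟩)
    · exact evalConsistent_exec.2.1 _ _ hE
    · exact (hjust _ _ (fun _ _ _ h => h) (fun _ _ _ h => h)).2.1 rfl
  · rintro s₀ s₁ σ' τ' (hE | ⟨rfl, rfl, rfl⟩)
    · obtain ⟨τ₀, h1, h2⟩ := evalConsistent_exec.2.2.1 _ _ _ _ hE
      exact ⟨τ₀, Or.inl h1, h2⟩
    · obtain ⟨τ₀, h1, h2⟩ := (hjust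
        (fun s' a b => Exec s' a b ∨ (s' = Stmt.seq s₀ s₁ ∧ a = σ' ∧ b = τ'))
        ExecSeq (fun _ _ _ h => Or.inl h) (fun _ _ _ h => h)).2.2.1 s₀ s₁ rfl
      exact ⟨τ₀, h1, h2⟩
  · rintro e st sf σ' τ' (hE | ⟨rfl, rfl, rfl⟩)
    · exact evalConsistent_exec.2.2.2.1 _ _ _ _ _ hE
    · exact (hjust _ _ (fun _ _ _ h => h) (fun _ _ _ h => h)).2.2.2.1 e st sf rfl
  · rintro e st σ' τ' (hE | ⟨rfl, rfl, rfl⟩)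
    · rcases evalConsistent_exec.2.2.2.2.1 _ _ _ _ hE with ⟨h1, τ₀, h2, h3⟩ | hh
      · exact Or.inl ⟨h1, τ₀, h2, h3⟩
      · exact Or.inr hh
    · exact (hjust _ _ (fun _ _ _ h => h) (fun _ _ _ h => h)).2.2.2.2 e st rfl
  · intro s' a b hES
    rcases evalConsistent_exec.2.2.2.2.2 _ _ _ hES with ⟨σ₀, h1, h2⟩ |
      ⟨σ₀, τ₀, τ₀', h1, h2, h3⟩
    · exact Or.inl ⟨σ₀, h1, Or.inl h2⟩
    · exact Or.inr ⟨σ₀, τ₀, τ₀', h1, h2, h3⟩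

lemma exec_assign {x : Var} {e : Expr} {σ : State} :
    Exec (.assign x e) σ (Trace.cons σ (Trace.single (update σ x (e σ)))) := by
  refine exec_intro fun E ES hE hES => ⟨?_, ?_, ?_, ?_, ?_⟩ <;>
    intros <;> first
      | (rename_i heq; cases heq; first | rfl | rename_i h; exact absurd rfl h)
      | skip
  all_goals (rename_i heq; cases heq)

lemma exec_skip {σ : State} : Exec .skip σ (Trace.single σ) := by
  refine exec_intro fun E ES hE hES => ⟨?_, ?_, ?_, ?_, ?_⟩ <;> intros <;>
    (rename_i heq; cases heq) <;> rfl

lemma exec_seq {s₀ s₁ : Stmt} {σ : State} {τ τ' : Trace}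
    (h1 : Exec s₀ σ τ) (h2 : ExecSeq s₁ τ τ') : Exec (.seq s₀ s₁) σ τ' := by
  refine exec_intro fun E ES hE hES => ⟨?_, ?_, ?_, ?_, ?_⟩ <;> intros <;>
    (rename_i heq; cases heq)
  exact ⟨τ, hE _ _ _ h1, hES _ _ _ h2⟩

lemma exec_if_true {e : Expr} {st sf : Stmt} {σ : State} {τ : Trace}
    (he : istrue e σ) (h : Exec st σ τ) :
    Exec (.ifte e st sf) σ (Trace.cons σ τ) := by
  refine exec_intro fun E ES hE hES => ⟨?_, ?_, ?_, ?_, ?_⟩ <;> intros <;>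
    (rename_i heq; cases heq)
  exact Or.inl ⟨he, hES _ _ _ (execSeq_cons (execSeq_single h))⟩

lemma exec_if_false {e : Expr} {st sf : Stmt} {σ : State} {τ : Trace}
    (he : ¬ istrue e σ) (h : Exec sf σ τ) :
    Exec (.ifte e st sf) σ (Trace.cons σ τ) := by
  refine exec_intro fun E ES hE hES => ⟨?_, ?_, ?_, ?_, ?_⟩ <;> intros <;>
    (rename_i heq; cases heq)
  exact Or.inr ⟨he, hES _ _ _ (execSeq_cons (execSeq_single h))⟩

lemma execSeq_of_not_finite {s : Stmt} {τ : Trace} (h : ¬ FiniteT τ) :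
    ExecSeq s τ τ := by
  refine ⟨Exec, fun s' a b => ExecSeq s' a b ∨ (a = b ∧ ¬ FiniteT a),
    ⟨evalConsistent_exec.1, evalConsistent_exec.2.1, ?_, ?_, ?_, ?_⟩,
    Or.inr ⟨rfl, h⟩⟩
  · intro s₀ s₁ σ' τ' hE
    obtain ⟨τ₀, h1, h2⟩ := evalConsistent_exec.2.2.1 _ _ _ _ hE
    exact ⟨τ₀, h1, Or.inl h2⟩
  · intro e st sf σ' τ' hE
    rcases evalConsistent_exec.2.2.2.1 _ _ _ _ _ hE with ⟨h1, h2⟩ | ⟨h1, h2⟩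
    · exact Or.inl ⟨h1, Or.inl h2⟩
    · exact Or.inr ⟨h1, Or.inl h2⟩
  · intro e st σ' τ' hE
    rcases evalConsistent_exec.2.2.2.2.1 _ _ _ _ hE with ⟨h1, τ₀, h2, h3⟩ | hh
    · exact Or.inl ⟨h1, τ₀, Or.inl h2, Or.inl h3⟩
    · exact Or.inr hh
  · rintro s' a b (hES | ⟨rfl, hnf⟩)
    · rcases evalConsistent_exec.2.2.2.2.2 _ _ _ hES with ⟨σ₀, h1, h2⟩ |
        ⟨σ₀, τ₀, τ₀', h1, h2, h3⟩
      · exact Or.inl ⟨σ₀, h1, h2⟩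
      · exact Or.inr ⟨σ₀, τ₀, τ₀', h1, h2, Or.inl h3⟩
    · obtain ⟨σ₀, τ₀, rfl, hnf'⟩ := not_finite_cases hnf
      exact Or.inr ⟨σ₀, τ₀, τ₀, rfl, rfl, Or.inr ⟨rfl, hnf'⟩⟩

lemma graft_exec {V : StatePred} {Q : TracePred} {s₁ : Stmt} :
    ∀ {τ₀ τ : Trace}, Follows (Sglt V) τ₀ τ →
    (∀ σ, V σ → ∃ τ₂, Exec s₁ σ τ₂ ∧ Q τ₂) →
    ∃ τ'', ExecSeq s₁ τ τ'' ∧ Follows Q τ₀ τ'' := by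
  have key : ∀ τ₀ σe, Converges τ₀ σe → ∀ τ, Follows (Sglt V) τ₀ τ →
      (∀ σ, V σ → ∃ τ₂, Exec s₁ σ τ₂ ∧ Q τ₂) →
      ∃ τ'', ExecSeq s₁ τ τ'' ∧ Follows Q τ₀ τ'' := by
    intro τ₀ σe hc
    induction hc with
    | single σ =>
      intro τ hf hV
      rcases follows_dest hf with ⟨σ₀, h1, h2, hQ⟩ | ⟨σ₀, a', b', h1, h2, h3⟩
      · obtain ⟨σ', hVσ, rfl⟩ := hQ
        have hσ : σ' = σ₀ := h2
        have hσ2 : σ = σ₀ := Trace.single_inj h1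
        obtain ⟨τ₂, hE, hQ₂⟩ := hV σ' hVσ
        have hhd : τ₂.hd = σ := by rw [exec_hd _ hE, hσ, hσ2]
        exact ⟨τ₂, execSeq_single hE, follows_single hhd hQ₂⟩
      · exact absurd h1 Trace.single_ne_cons
    | cons σ' hc ih =>
      intro τ hf hV
      rcases follows_dest hf with ⟨σ₀, h1, h2, h3⟩ | ⟨σ₀, a', b', h1, h2, h3⟩
      · exact absurd h1.symm Trace.single_ne_cons
      · obtain ⟨rfl, rfl⟩ := Trace.cons_inj h1
        subst h2
        obtain ⟨τ'', hES, hF⟩ := ih _ h3 hV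
        exact ⟨Trace.cons σ' τ'', execSeq_cons hES, follows_cons hF⟩
  intro τ₀ τ hf hV
  by_cases hfin : FiniteT τ₀
  · obtain ⟨σe, hc⟩ := hfin
    exact key τ₀ σe hc τ hf hV
  · refine ⟨τ, execSeq_of_not_finite ?_, follows_of_not_finite hfin hf⟩
    rintro ⟨σ₁, hc⟩
    exact hfin (finite_of_follows hc hf)

end ExecAPI

section Loop

open Stream' (Seq)
open Classical in
/-- Next corecursion state for the loop trace. -/
noncomputable def lnext (e : Expr) (g : State → Trace) (τ : Trace) :
    Option (Trace ⊕ State) :=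
  match τ.2.destruct with
  | some (σ₂, s') => some (Sum.inl (σ₂, s'))
  | none => if istrue e τ.1 then some (Sum.inl (g τ.1)) else some (Sum.inr τ.1)

/-- Emission function for the loop trace. -/
noncomputable def lemit (e : Expr) (g : State → Trace) :
    Option (Trace ⊕ State) → Option (State × Option (Trace ⊕ State))
  | none => none
  | some (Sum.inr σ) => some (σ, none)
  | some (Sum.inl τ) => some (τ.1, lnext e g τ)

/-- The (possibly infinite) trace of the while loop continued after `τ`. -/
noncomputable def loopTrace (e : Expr) (g : State → Trace) (τ : Trace) : Trace :=
  (τ.1, Seq.corec (lemit e g) (lnext e g τ))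

lemma corec_lemit_some {e : Expr} {g : State → Trace}
    {γ : Option (Trace ⊕ State)} {σ : State} {γ' : Option (Trace ⊕ State)}
    (h : lemit e g γ = some (σ, γ')) :
    Seq.corec (lemit e g) γ = Seq.cons σ (Seq.corec (lemit e g) γ') :=
  Seq.destruct_eq_cons (by rw [Seq.corec_eq, h]; rfl)

lemma cons_corec_lnext (e : Expr) (g : State → Trace) (σ : State) (τ : Trace) :
    (σ, Seq.corec (lemit e g) (some (Sum.inl τ))) = Trace.cons σ (loopTrace e g τ) := by
  rw [show Trace.cons σ (loopTrace e g τ) =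
    (σ, Seq.cons (loopTrace e g τ).1 (loopTrace e g τ).2) from rfl]
  rw [corec_lemit_some (show lemit e g (some (Sum.inl τ)) = some (τ.1, lnext e g τ) from rfl)]
  rfl

lemma loopTrace_cons (e : Expr) (g : State → Trace) (σ : State) (τ : Trace) :
    loopTrace e g (Trace.cons σ τ) = Trace.cons σ (loopTrace e g τ) := by
  rw [← cons_corec_lnext]
  unfold loopTrace lnext
  rw [show (Trace.cons σ τ).2 = Seq.cons τ.1 τ.2 from rfl, Seq.destruct_cons]
  rfl

lemma loopTrace_single_pos (e : Expr) (g : State → Trace) {σ : State}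
    (h : istrue e σ) :
    loopTrace e g (Trace.single σ) = Trace.cons σ (loopTrace e g (g σ)) := by
  rw [← cons_corec_lnext]
  unfold loopTrace lnext
  rw [show (Trace.single σ).2 = Seq.nil from rfl, Seq.destruct_nil]
  rw [if_pos (show istrue e (Trace.single σ).1 from h)]
  rfl

lemma loopTrace_single_neg (e : Expr) (g : State → Trace) {σ : State}
    (h : ¬ istrue e σ) :
    loopTrace e g (Trace.single σ) = Trace.cons σ (Trace.single σ) := by
  unfold loopTrace lnext
  rw [show (Trace.single σ).2 = Seq.nil from rfl, Seq.destruct_nil]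
  rw [if_neg (show ¬ istrue e (Trace.single σ).1 from h)]
  show (σ, Seq.corec (lemit e g) (some (Sum.inr σ))) = Trace.cons σ (Trace.single σ)
  rw [corec_lemit_some (show lemit e g (some (Sum.inr σ)) = some (σ, none) from rfl)]
  have hnil : Seq.corec (lemit e g) none = Seq.nil :=
    Seq.destruct_eq_none (by rw [Seq.corec_eq]; rfl)
  rw [hnil]
  rfl

lemma loopTrace_hd (e : Expr) (g : State → Trace) (τ : Trace) :
    (loopTrace e g τ).hd = τ.1 := rfl

/-- `SafeT I τ`: if `τ` is finite, its last state satisfies `I`. -/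
def SafeT (I : StatePred) (τ : Trace) : Prop := ∀ σ, Converges τ σ → I σ

lemma safeT_of_chop {I : StatePred} {P : TracePred} {τ : Trace}
    (h : Chop P (Sglt I) τ) : SafeT I τ := by
  rintro σ hc
  obtain ⟨τp, -, hf⟩ := h
  exact converges_of_follows_sglt hc hf

lemma safeT_cons {I : StatePred} {σ : State} {τ : Trace} (h : SafeT I τ) :
    SafeT I (Trace.cons σ τ) := fun σ' hc => h σ' (converges_cons_inv hc)

lemma safeT_cons_inv {I : StatePred} {σ : State} {τ : Trace}
    (h : SafeT I (Trace.cons σ τ)) : SafeT I τ :=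
  fun σ' hc => h σ' (Converges.cons σ hc)

section LoopLemmas

variable {e : Expr} {g : State → Trace} {I : StatePred} {P : TracePred} {st : Stmt}
variable (hg : ∀ σ, istrue e σ → I σ → Exec st σ (g σ) ∧ Chop P (Sglt I) (g σ))

include hg

lemma loop_last :
    ∀ {ρ : Trace} {σ' : State}, Converges ρ σ' → ∀ τ, SafeT I τ →
      ρ = loopTrace e g τ → ¬ istrue e σ' := by
  intro ρ σ' hc
  induction hc with
  | single σ'' =>
    intro τ hS heq
    rcases trace_cases τ with ⟨σ₁, rfl⟩ | ⟨σ₁, τ₁, rfl⟩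
    · by_cases he : istrue e σ₁
      · rw [loopTrace_single_pos e g he] at heq
        exact absurd heq Trace.single_ne_cons
      · rw [loopTrace_single_neg e g he] at heq
        exact absurd heq Trace.single_ne_cons
    · rw [loopTrace_cons] at heq
      exact absurd heq Trace.single_ne_cons
  | cons σ'' hc ih =>
    intro τ hS heq
    rcases trace_cases τ with ⟨σ₁, rfl⟩ | ⟨σ₁, τ₁, rfl⟩
    · by_cases he : istrue e σ₁
      · rw [loopTrace_single_pos e g he] at heq
        obtain ⟨rfl, heq2⟩ := Trace.cons_inj heq
        exact ih (g σ'') (safeT_of_chop (hg σ'' he (hS σ'' (Converges.single σ''))).2) heq2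
      · rw [loopTrace_single_neg e g he] at heq
        obtain ⟨rfl, rfl⟩ := Trace.cons_inj heq
        obtain rfl := converges_single_inv hc
        exact he
    · rw [loopTrace_cons] at heq
      obtain ⟨rfl, heq2⟩ := Trace.cons_inj heq
      exact ih τ₁ (safeT_cons_inv hS) heq2

omit hg

lemma follows_loopTrace_of_not_finite {Q : TracePred} {τ : Trace}
    (h : ¬ FiniteT τ) : Follows Q τ (loopTrace e g τ) := by
  refine follows_coind (fun x y => ¬ FiniteT x ∧ y = loopTrace e g x) ?_ _ _ ⟨h, rfl⟩
  rintro x y ⟨hx, rfl⟩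
  obtain ⟨σ, x', rfl, hx'⟩ := not_finite_cases hx
  exact Or.inr ⟨σ, x', loopTrace e g x', rfl, loopTrace_cons e g σ x', Or.inl ⟨hx', rfl⟩⟩

/-- Witness predicate for the iteration. -/
def LoopX (e : Expr) (g : State → Trace) (I : StatePred) (P : TracePred) :
    TracePred := fun ρ =>
  (∃ σ, ρ = Trace.single σ) ∨ ∃ τ, Chop P (Sglt I) τ ∧ ρ = loopTrace e g τ

include hg

lemma graft_dup : ∀ {τp τ : Trace}, Follows (Sglt I) τp τ →
    ∃ τ₀, Follows (Dup I) τp τ₀ ∧ Follows (LoopX e g I P) τ₀ (loopTrace e g τ) := by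
  have key : ∀ τp σe, Converges τp σe → ∀ τ, Follows (Sglt I) τp τ →
      ∃ τ₀, Follows (Dup I) τp τ₀ ∧ Follows (LoopX e g I P) τ₀ (loopTrace e g τ) := by
    intro τp σe hc
    induction hc with
    | single σ =>
      intro τ hf
      rcases follows_dest hf with ⟨σ₀, h1, h2, hQ⟩ | ⟨σ₀, a', b', h1, h2, h3⟩
      · obtain ⟨σ', hI, rfl⟩ := hQ
        have hσ : σ' = σ₀ := h2
        have hσ2 : σ = σ₀ := Trace.single_inj h1
        subst hσ; subst hσ2
        refine ⟨Trace.cons σ (Trace.single σ), follows_single rfl ⟨σ, hI, rfl⟩, ?_⟩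
        by_cases he : istrue e σ
        · rw [loopTrace_single_pos e g he]
          refine follows_cons (follows_single ?_ (Or.inr ⟨g σ, (hg σ he hI).2, rfl⟩))
          rw [loopTrace_hd]
          exact exec_hd _ (hg σ he hI).1
        · rw [loopTrace_single_neg e g he]
          exact follows_cons (follows_single rfl (Or.inl ⟨σ, rfl⟩))
      · exact absurd h1 Trace.single_ne_cons
    | cons σ' hc ih =>
      intro τ hf
      rcases follows_dest hf with ⟨σ₀, h1, h2, h3⟩ | ⟨σ₀, a', b', h1, h2, h3⟩
      · exact absurd h1.symm Trace.single_ne_cons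
      · obtain ⟨rfl, rfl⟩ := Trace.cons_inj h1
        subst h2
        obtain ⟨τ₀, hd1, hd2⟩ := ih _ h3
        exact ⟨Trace.cons σ' τ₀, follows_cons hd1,
          by rw [loopTrace_cons]; exact follows_cons hd2⟩
  intro τp τ hf
  by_cases hfin : FiniteT τp
  · obtain ⟨σe, hc⟩ := hfin
    exact key τp σe hc τ hf
  · refine ⟨τ, follows_of_not_finite hfin hf, follows_loopTrace_of_not_finite ?_⟩
    rintro ⟨σ₁, hc⟩
    exact hfin (finite_of_follows hc hf)

lemma iter_loopTrace {τ : Trace} (h : Chop P (Sglt I) τ) :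
    Iter (Chop P (Dup I)) (loopTrace e g τ) := by
  refine ⟨LoopX e g I P, Or.inr ⟨τ, h, rfl⟩, ?_⟩
  rintro a (⟨σ, rfl⟩ | ⟨τ', ⟨τp, hP, hf⟩, rfl⟩)
  · exact Or.inl ⟨σ, trivial, rfl⟩
  · obtain ⟨τ₀, h1, h2⟩ := graft_dup hg hf
    exact Or.inr ⟨τ₀, ⟨τp, hP, h1⟩, h2⟩

lemma exec_loopTrace {σ : State} (hI : I σ) :
    Exec (.whileDo e st) σ (loopTrace e g (Trace.single σ)) := by
  refine ⟨fun s' a b => Exec s' a b ∨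
      (s' = .whileDo e st ∧ ∃ σ₁, I σ₁ ∧ a = σ₁ ∧ b = loopTrace e g (Trace.single σ₁)),
    fun s' a b => ExecSeq s' a b ∨
      (s' = .whileDo e st ∧ ∃ τ, SafeT I τ ∧ a = τ ∧ b = loopTrace e g τ),
    ⟨?_, ?_, ?_, ?_, ?_, ?_⟩, Or.inr ⟨rfl, σ, hI, rfl, rfl⟩⟩
  · rintro x e' σ' τ' (hE | ⟨heq, -⟩)
    · exact evalConsistent_exec.1 _ _ _ _ hE
    · cases heq
  · rintro σ' τ' (hE | ⟨heq, -⟩)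
    · exact evalConsistent_exec.2.1 _ _ hE
    · cases heq
  · rintro s₀ s₁ σ' τ' (hE | ⟨heq, -⟩)
    · obtain ⟨τ₀, h1, h2⟩ := evalConsistent_exec.2.2.1 _ _ _ _ hE
      exact ⟨τ₀, Or.inl h1, Or.inl h2⟩
    · cases heq
  · rintro e' st' sf' σ' τ' (hE | ⟨heq, -⟩)
    · rcases evalConsistent_exec.2.2.2.1 _ _ _ _ _ hE with ⟨h1, h2⟩ | ⟨h1, h2⟩
      · exact Or.inl ⟨h1, Or.inl h2⟩
      · exact Or.inr ⟨h1, Or.inl h2⟩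
    · cases heq
  · rintro e' st' σ' τ' (hE | ⟨heq, σ₁, hI₁, rfl, rfl⟩)
    · rcases evalConsistent_exec.2.2.2.2.1 _ _ _ _ hE with ⟨h1, τ₀, h2, h3⟩ | hh
      · exact Or.inl ⟨h1, τ₀, Or.inl h2, Or.inl h3⟩
      · exact Or.inr hh
    · cases heq
      by_cases he : istrue e σ'
      · refine Or.inl ⟨he, Trace.cons σ' (g σ'),
          Or.inl (execSeq_cons (execSeq_single (hg σ' he hI₁).1)), Or.inr ⟨rfl,
          Trace.cons σ' (g σ'), safeT_cons (safeT_of_chop (hg σ' he hI₁).2), rfl, ?_⟩⟩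
        rw [loopTrace_single_pos e g he, loopTrace_cons]
      · exact Or.inr ⟨he, loopTrace_single_neg e g he⟩
  · rintro s' a b (hES | ⟨heq, τ, hS, rfl, rfl⟩)
    · rcases evalConsistent_exec.2.2.2.2.2 _ _ _ hES with ⟨σ₀, h1, h2⟩ |
        ⟨σ₀, τ₀, τ₀', h1, h2, h3⟩
      · exact Or.inl ⟨σ₀, h1, Or.inl h2⟩
      · exact Or.inr ⟨σ₀, τ₀, τ₀', h1, h2, Or.inl h3⟩
    · subst heq
      rcases trace_cases a with ⟨σ₁, rfl⟩ | ⟨σ₁, τ₁, rfl⟩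
      · exact Or.inl ⟨σ₁, rfl, Or.inr ⟨rfl, σ₁, hS σ₁ (Converges.single σ₁), rfl, rfl⟩⟩
      · exact Or.inr ⟨σ₁, τ₁, loopTrace e g τ₁, rfl, loopTrace_cons e g σ₁ τ₁,
          Or.inr ⟨rfl, τ₁, safeT_cons_inv hS, rfl, rfl⟩⟩

end LoopLemmas

lemma iter_single {W : TracePred} (σ : State) : Iter W (Trace.single σ) :=
  ⟨Sglt (fun _ => True), ⟨σ, trivial, rfl⟩, fun _ ha => Or.inl ha⟩

end Loop

/-- Total-correctness soundness of the trace-based Hoare logic. -/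
theorem tHoare_sound_total (s : Stmt) (U : StatePred) (P : TracePred)
    (hP : IsSetoidPred P) (h : THoare U s P) :
    ∀ σ : State, U σ → ∃ τ : Trace, Exec s σ τ ∧ P τ := by
  clear hP
  induction h with
  | assign U x e =>
    intro σ hU
    exact ⟨_, exec_assign, σ, hU, rfl⟩
  | skip U =>
    intro σ hU
    exact ⟨_, exec_skip, σ, hU, rfl⟩
  | seq h₀ h₁ ih₀ ih₁ =>
    intro σ hU
    obtain ⟨τ, hex, τ₀, hP₀, hf⟩ := ih₀ σ hU
    obtain ⟨τ'', hES, hF⟩ := graft_exec hf (fun σ' hV => ih₁ σ' hV)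
    exact ⟨τ'', exec_seq hex hES, τ₀, hP₀, hF⟩
  | @ifte U e st sf P ht hf iht ihf =>
    intro σ hU
    by_cases he : istrue e σ
    · obtain ⟨τ, hex, hPτ⟩ := iht σ ⟨he, hU⟩
      exact ⟨Trace.cons σ τ, exec_if_true he hex, Trace.cons σ (Trace.single σ),
        ⟨σ, hU, rfl⟩, follows_cons (follows_single (exec_hd _ hex) hPτ)⟩
    · obtain ⟨τ, hex, hPτ⟩ := ihf σ ⟨he, hU⟩
      exact ⟨Trace.cons σ τ, exec_if_false he hex, Trace.cons σ (Trace.single σ),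
        ⟨σ, hU, rfl⟩, follows_cons (follows_single (exec_hd _ hex) hPτ)⟩
  | @whileDo U I e st P hUI hbody ih =>
    intro σ hU
    have hch : ∀ σ', ∃ τ, istrue e σ' → I σ' →
        Exec st σ' τ ∧ Chop P (Sglt I) τ := by
      intro σ'
      by_cases h : istrue e σ' ∧ I σ'
      · obtain ⟨τ, h1, h2⟩ := ih σ' ⟨h.1, h.2⟩
        exact ⟨τ, fun _ _ => ⟨h1, h2⟩⟩
      · exact ⟨Trace.single σ', fun h1 h2 => absurd ⟨h1, h2⟩ h⟩
    choose g hg using hch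
    have hI : I σ := hUI σ hU
    refine ⟨loopTrace e g (Trace.single σ), exec_loopTrace hg hI,
      Trace.cons σ (Trace.single σ), ⟨σ, hU, rfl⟩, ?_⟩
    by_cases he : istrue e σ
    · rw [loopTrace_single_pos e g he]
      refine follows_cons (follows_single ?_ ?_)
      · rw [loopTrace_hd]
        exact exec_hd _ (hg σ he hI).1
      · refine ⟨loopTrace e g (g σ), iter_loopTrace hg (hg σ he hI).2,
          follows_self ?_⟩
        intro σ' hc
        exact ⟨σ', loop_last hg hc (g σ) (safeT_of_chop (hg σ he hI).2) rfl, rfl⟩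
    · rw [loopTrace_single_neg e g he]
      exact follows_cons (follows_single rfl ⟨Trace.single σ, iter_single σ,
        follows_single rfl ⟨σ, he, rfl⟩⟩)
  | conseq hUU' h' hPP' ih =>
    intro σ hU
    obtain ⟨τ, h1, h2⟩ := ih σ (hUU' σ hU)
    exact ⟨τ, h1, hPP' τ h2⟩
  | exist hz ihz =>
    rintro σ ⟨z, hz'⟩
    obtain ⟨τ, h1, h2⟩ := ihz z σ hz'
    exact ⟨τ, h1, z, h2⟩


end WhileTrace
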